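/- Let v_0 F_0 v_1 F_1 ... F_{n-1} v_0 be a closed walk in the d-uniform hypergraph C_d on vertex set Z^d whose hyperedges are the sets {x + r e_1, ..., x + r e_d} for x in Z^d and positive integers r. For each hyperedge F = {x + r e_1, ..., x + r e_d}, define the labelling \lambda_F(x + r e_i) = i. Then the multigraph on vertex set {1, ..., d} with edge multiset { \lambda_{F_i}(v_i) \lambda_{F_i}(v_{i+1}) : 0 \le i < n } is bridgeless. -/

import Mathlib

/-- One adjacency step in a multigraph given by endpoint maps `efst, esnd : E → V`,
using only edges in `S`. -/
def MStep {V E : Type*} (efst esnd : E → V) (S : Set E) (x y : V) : Prop :=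
  ∃ e ∈ S, (efst e = x ∧ esnd e = y) ∨ (efst e = y ∧ esnd e = x)

/-- The number of connected components of the multigraph restricted to the edge set `S`. -/
noncomputable def numComponents {V E : Type*} (efst esnd : E → V) (S : Set E) : ℕ :=
  Nat.card (Quotient (Relation.EqvGen.setoid (MStep efst esnd S)))

/-- An edge is a bridge if deleting it increases the number of connected components. -/
def IsBridge {V E : Type*} (efst esnd : E → V) (e : E) : Prop :=
  numComponents efst esnd Set.univ < numComponents efst esnd {e}ᶜ


/-- for every closed walk `v 0, F 0, v 1, F 1, …, F (n-1), v 0` in the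
`d`-uniform hypergraph `C_d` on `ℤ^d` (hyperedges `{x + r • e₁, …, x + r • e_d}` for
`x ∈ ℤ^d` and `r > 0`; the hyperedge `F i` is recorded by its base point `x i` and
radius `r i`, with `v i = x i + r i • e_{a i}` and `v (i+1) = x i + r i • e_{b i}`,
so `a i` and `b i` are the labels `λ_{F i} (v i)` and `λ_{F i} (v (i+1))`),
the projection multigraph on `{1, …, d}` with edge multiset
`{a i — b i : 0 ≤ i < n}` is bridgeless. -/
theorem stmt_1 (d n : ℕ) (hd : 2 ≤ d) (hn : 0 < n)
    (v x : ℕ → Fin d → ℤ) (r : ℕ → ℤ) (a b : ℕ → Fin d)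
    (hr : ∀ i < n, 0 < r i)
    (hv : ∀ i < n, v i = x i + Pi.single (a i) (r i))
    (hv' : ∀ i < n, v ((i + 1) % n) = x i + Pi.single (b i) (r i))
    (hFne : ∀ i < n,
      ({w | ∃ j : Fin d, w = x i + Pi.single j (r i)} : Set (Fin d → ℤ)) ≠
      {w | ∃ j : Fin d, w = x ((i + 1) % n) + Pi.single j (r ((i + 1) % n))})
    (hdist : ∀ i j, 1 ≤ i → i < j → j < n → v i ≠ v j) :
    ∀ e : Fin n, ¬ IsBridge (fun i : Fin n => a i.1) (fun i : Fin n => b i.1) e := by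
  classical
  intro e hbr
  haveI : NeZero n := ⟨hn.ne'⟩
  set efst : Fin n → Fin d := (fun i : Fin n => a i.1) with hefst
  set esnd : Fin n → Fin d := (fun i : Fin n => b i.1) with hesnd
  -- Step 1: a_e and b_e are not connected in G - e
  have hrel : ¬ Relation.EqvGen (MStep efst esnd ({e}ᶜ : Set (Fin n))) (efst e) (esnd e) := by
    intro h
    have heq : ∀ p q, Relation.EqvGen (MStep efst esnd (Set.univ : Set (Fin n))) p q ↔
        Relation.EqvGen (MStep efst esnd ({e}ᶜ : Set (Fin n))) p q := by
      intro p q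
      constructor
      · intro hxy
        induction hxy with
        | rel p q hpq =>
          obtain ⟨f, -, hf⟩ := hpq
          by_cases hfe : f = e
          · subst hfe
            rcases hf with ⟨h1, h2⟩ | ⟨h1, h2⟩
            · rw [← h1, ← h2]; exact h
            · rw [← h1, ← h2]; exact Relation.EqvGen.symm _ _ h
          · exact Relation.EqvGen.rel _ _ ⟨f, hfe, hf⟩
        | refl p => exact Relation.EqvGen.refl p
        | symm p q _ ih => exact Relation.EqvGen.symm _ _ ih
        | trans p q s _ _ ih1 ih2 => exact Relation.EqvGen.trans _ _ _ ih1 ih2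
      · intro hxy
        refine Relation.EqvGen.mono ?_ _ _ hxy
        intro p q hpq
        obtain ⟨f, -, hf⟩ := hpq
        exact ⟨f, trivial, hf⟩
    have hset : Relation.EqvGen.setoid (MStep efst esnd (Set.univ : Set (Fin n))) =
        Relation.EqvGen.setoid (MStep efst esnd ({e}ᶜ : Set (Fin n))) :=
      Setoid.ext fun p q => heq p q
    have hnum : numComponents efst esnd (Set.univ : Set (Fin n)) =
        numComponents efst esnd ({e}ᶜ : Set (Fin n)) := by
      unfold numComponents; rw [hset]
    rw [IsBridge, hnum] at hbr
    exact lt_irrefl _ hbr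
  -- Step 2: the component S of a_e in G - e
  set S : Finset (Fin d) := Finset.univ.filter
      (fun j => Relation.EqvGen (MStep efst esnd ({e}ᶜ : Set (Fin n))) (efst e) j) with hS
  have hmemS : ∀ j, j ∈ S ↔ Relation.EqvGen (MStep efst esnd ({e}ᶜ : Set (Fin n))) (efst e) j := by
    intro j; simp [hS]
  have hAe : a e.1 ∈ S := (hmemS _).mpr (Relation.EqvGen.refl _)
  have hBe : b e.1 ∉ S := fun hm => hrel ((hmemS _).mp hm)
  have hclosed : ∀ i : Fin n, i ≠ e → (a i.1 ∈ S ↔ b i.1 ∈ S) := by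
    intro i hie
    have hstep : MStep efst esnd ({e}ᶜ : Set (Fin n)) (a i.1) (b i.1) :=
      ⟨i, hie, Or.inl ⟨rfl, rfl⟩⟩
    rw [hmemS, hmemS]
    constructor
    · intro hm; exact Relation.EqvGen.trans _ _ _ hm (Relation.EqvGen.rel _ _ hstep)
    · intro hm; exact Relation.EqvGen.trans _ _ _ hm
        (Relation.EqvGen.symm _ _ (Relation.EqvGen.rel _ _ hstep))
  -- Step 3: telescoping
  have htel : ∑ i ∈ Finset.range n,
      ((Pi.single (b i) (r i) : Fin d → ℤ) - Pi.single (a i) (r i)) = 0 := by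
    have h1 : ∀ i ∈ Finset.range n,
        ((Pi.single (b i) (r i) : Fin d → ℤ) - Pi.single (a i) (r i))
          = v ((i + 1) % n) - v i := by
      intro i hi
      rw [Finset.mem_range] at hi
      rw [hv i hi, hv' i hi]; abel
    rw [Finset.sum_congr rfl h1, Finset.sum_sub_distrib, sub_eq_zero,
      Finset.sum_range, Finset.sum_range]
    refine Fintype.sum_equiv (Equiv.addRight (1 : Fin n)) _ _ ?_
    intro i
    have hval : ((i + 1 : Fin n) : ℕ) = ((i : ℕ) + 1) % n := by
      rw [Fin.add_def, Fin.val_one']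
      conv_rhs => rw [Nat.add_mod]
      rw [Nat.mod_eq_of_lt i.isLt]
    show v (((i : ℕ) + 1) % n) = v ((i + 1 : Fin n) : ℕ)
    rw [hval]
  -- Step 4: evaluate the telescoping identity on S
  have key : ∑ i ∈ Finset.range n,
      ((if b i ∈ S then r i else 0) - (if a i ∈ S then r i else 0)) = 0 := by
    have h0 : ∀ j, ∑ i ∈ Finset.range n,
        ((Pi.single (b i) (r i) : Fin d → ℤ) j - (Pi.single (a i) (r i) : Fin d → ℤ) j) = 0 := by
      intro j
      have := congrFun htel j
      simpa using this
    have h0' : ∑ j ∈ S, ∑ i ∈ Finset.range n,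
        ((Pi.single (b i) (r i) : Fin d → ℤ) j - (Pi.single (a i) (r i) : Fin d → ℤ) j) = 0 := by
      simp [h0]
    rw [Finset.sum_comm] at h0'
    simp only [Pi.single_apply, Finset.sum_sub_distrib, Finset.sum_ite_eq' S] at h0'
    simpa using h0'
  have hterm : ∑ i ∈ Finset.range n,
      ((if b i ∈ S then r i else 0) - (if a i ∈ S then r i else 0)) = - r e.1 := by
    rw [Finset.sum_eq_single_of_mem e.1 (Finset.mem_range.mpr e.isLt)]
    · rw [if_neg hBe, if_pos hAe]; ring
    · intro i hi hie
      have hie' : (⟨i, Finset.mem_range.mp hi⟩ : Fin n) ≠ e := by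
        intro hh
        exact hie (congrArg Fin.val hh)
      have hc := hclosed ⟨i, Finset.mem_range.mp hi⟩ hie'
      simp only at hc
      by_cases hA : a i ∈ S
      · rw [if_pos hA, if_pos (hc.mp hA)]; ring
      · rw [if_neg hA, if_neg (fun hB => hA (hc.mpr hB))]; ring
  rw [key] at hterm
  have := hr e.1 e.isLt
  omega
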